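/- Let α, γ : A → A be algebra endomorphisms such that for some m ≥ 1 and all a₁, …, aₘ ∈ A one has (α(a₁) − γ(a₁))⋯(α(aₘ) − γ(aₘ)) = 0, and suppose (ker α)^N = 0 for some N ≥ 1. Then (ker γ)^(mN) = 0. -/
import Mathlib


/-- Product of a list of elements in a (possibly non-unital) algebra;
the empty product is set to `0` (it is never used below). -/
def mprod {R : Type*} [Mul R] [Zero R] : List R → R
  | [] => 0
  | [a] => a
  | a :: l => a * mprod l

lemma mprod_cons {R : Type*} [Mul R] [Zero R] (a b : R) (l : List R) :
    mprod (a :: b :: l) = a * mprod (b :: l) := rfl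

lemma mprod_append {R : Type*} [Semigroup R] [Zero R] :
    ∀ (l1 l2 : List R), l1 ≠ [] → l2 ≠ [] →
    mprod (l1 ++ l2) = mprod l1 * mprod l2
  | [], _, h1, _ => absurd rfl h1
  | [a], b :: l2, _, _ => mprod_cons a b l2
  | a :: a' :: t, b :: l2, _, h2 => by
    rw [List.cons_append, List.cons_append, mprod_cons, ← List.cons_append,
      mprod_append (a' :: t) (b :: l2) (by simp) h2, mprod_cons, mul_assoc]
  | _ :: _, [], _, h2 => absurd rfl h2

lemma mprod_map {k : Type*} [Field k] {A : Type*}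
    [NonUnitalRing A] [Module k A] [SMulCommClass k A A] [IsScalarTower k A A]
    (f : A →ₙₐ[k] A) : ∀ (l : List A), l ≠ [] → mprod (l.map f) = f (mprod l)
  | [], h => absurd rfl h
  | [a], _ => rfl
  | a :: b :: t, _ => by
    rw [List.map_cons, List.map_cons, mprod_cons, mprod_cons,
      show (f b :: t.map f) = (b :: t).map f from rfl,
      mprod_map f (b :: t) (by simp), map_mul]

/-- If all `m`-fold products of differences `(α a − γ a)` vanish and
`(ker α)^N = 0`, then `(ker γ)^(mN) = 0`. -/
theorem stmt6 {k : Type*} [Field k] {A : Type*}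
    [NonUnitalRing A] [Module k A] [SMulCommClass k A A] [IsScalarTower k A A]
    (α γ : A →ₙₐ[k] A) (m N : ℕ) (hm : 1 ≤ m) (hN : 1 ≤ N)
    (hαγ : ∀ l : List A, l.length = m → mprod (l.map fun a => α a - γ a) = 0)
    (hker : ∀ l : List A, l.length = N → (∀ x ∈ l, α x = 0) → mprod l = 0) :
    ∀ l : List A, l.length = m * N → (∀ x ∈ l, γ x = 0) → mprod l = 0 := by
  -- key: any list of length m*n (n ≥ 0) with γ-kernel entries can be regrouped
  -- into a list of n elements of ker α with the same mprod.
  have key : ∀ n : ℕ, ∀ l : List A, l.length = m * n → (∀ x ∈ l, γ x = 0) →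
      ∃ L : List A, L.length = n ∧ (∀ y ∈ L, α y = 0) ∧ mprod L = mprod l := by
    intro n
    induction n with
    | zero =>
      intro l hl _
      simp at hl
      exact ⟨[], rfl, by simp, by rw [hl]⟩
    | succ n ih =>
      intro l hl hγ
      have hlen : m ≤ l.length := by
        rw [hl, Nat.mul_succ]; omega
      have htake : (l.take m).length = m := by
        rw [List.length_take]; omega
      have hdrop : (l.drop m).length = m * n := by
        rw [List.length_drop, hl, Nat.mul_succ]; omega
      have htne : l.take m ≠ [] := by
        intro h; rw [h] at htake; simp at htake; omega
      -- the block product is in ker α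
      have hαblock : α (mprod (l.take m)) = 0 := by
        rw [← mprod_map α _ htne]
        have : (l.take m).map α = (l.take m).map (fun a => α a - γ a) := by
          apply List.map_congr_left
          intro x hx
          rw [hγ x (List.mem_of_mem_take hx), sub_zero]
        rw [this]
        exact hαγ _ htake
      obtain ⟨L, hL1, hL2, hL3⟩ := ih (l.drop m) hdrop
        (fun x hx => hγ x (List.mem_of_mem_drop hx))
      refine ⟨mprod (l.take m) :: L, by simp [hL1], ?_, ?_⟩
      · intro y hy
        rcases List.mem_cons.1 hy with h | h
        · rw [h]; exact hαblock
        · exact hL2 y h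
      · rcases L with _ | ⟨b, L'⟩
        · -- n = 0, so drop is empty and l = take m
          have : n = 0 := by simpa using hL1.symm
          have hde : l.drop m = [] := List.length_eq_zero_iff.1 (by rw [hdrop, this, Nat.mul_zero])
          have : l.take m = l := by
            conv_rhs => rw [← List.take_append_drop m l, hde, List.append_nil]
          rw [this]; rfl
        · have hn : 1 ≤ n := by rw [← hL1]; simp
          have hdne : l.drop m ≠ [] := by
            intro h; rw [h] at hdrop; simp at hdrop; omega
          rw [mprod_cons, hL3, ← mprod_append _ _ htne hdne, List.take_append_drop]
  intro l hl hγ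
  obtain ⟨L, hL1, hL2, hL3⟩ := key N l hl hγ
  rw [← hL3]
  exact hker L hL1 hL2
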